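/- Let G and H be connected graphs, each with at least two vertices. If H is bipartite and the diameter of G satisfies D(G) < r(H), where r(H) is the radius of H, then dim_l(G ⊠ H) ≤ |V(H)|·dim_l(G). -/

import Mathlib

open SimpleGraph

/-- The strong product of two simple graphs. -/
def strongProd {α β : Type*} (G : SimpleGraph α) (H : SimpleGraph β) :
    SimpleGraph (α × β) where
  Adj x y := (x.1 = y.1 ∧ H.Adj x.2 y.2) ∨ (x.2 = y.2 ∧ G.Adj x.1 y.1) ∨
      (G.Adj x.1 y.1 ∧ H.Adj x.2 y.2)
  symm := by
    constructor
    rintro x y (⟨h1, h2⟩ | ⟨h1, h2⟩ | ⟨h1, h2⟩)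
    · exact Or.inl ⟨h1.symm, h2.symm⟩
    · exact Or.inr (Or.inl ⟨h1.symm, h2.symm⟩)
    · exact Or.inr (Or.inr ⟨h1.symm, h2.symm⟩)
  loopless := by
    constructor
    rintro x (⟨_, h⟩ | ⟨_, h⟩ | ⟨h, _⟩)
    · exact H.irrefl h
    · exact G.irrefl h
    · exact G.irrefl h

/-- A set `S` is a local metric generator for `G` if every pair of adjacent
vertices is distinguished by some element of `S`. -/
def IsLocalMetricGenerator {α : Type*} (G : SimpleGraph α) (S : Set α) : Prop :=
  ∀ u v : α, G.Adj u v → ∃ s ∈ S, G.dist u s ≠ G.dist v s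

/-- The local metric dimension of a graph. -/
noncomputable def localMetricDim {α : Type*} [Fintype α] (G : SimpleGraph α) : ℕ :=
  sInf {n | ∃ S : Finset α, S.card = n ∧ IsLocalMetricGenerator G ↑S}

/-- A set `S` is a metric generator for `G` if every pair of distinct
vertices is distinguished by some element of `S`. -/
def IsMetricGenerator {α : Type*} (G : SimpleGraph α) (S : Set α) : Prop :=
  ∀ u v : α, u ≠ v → ∃ s ∈ S, G.dist u s ≠ G.dist v s

/-- The metric dimension of a graph. -/
noncomputable def metricDim {α : Type*} [Fintype α] (G : SimpleGraph α) : ℕ :=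
  sInf {n | ∃ S : Finset α, S.card = n ∧ IsMetricGenerator G ↑S}

/-- The eccentricity of a vertex: the maximum distance to another vertex. -/
noncomputable def eccentricity {α : Type*} (G : SimpleGraph α) (v : α) : ℕ :=
  sSup {d | ∃ u, G.dist v u = d}

/-- The diameter of a graph: maximum eccentricity. -/
noncomputable def graphDiam {α : Type*} (G : SimpleGraph α) : ℕ :=
  sSup {d | ∃ v, eccentricity G v = d}

/-- The radius of a graph: minimum eccentricity. -/
noncomputable def graphRadius {α : Type*} (G : SimpleGraph α) : ℕ :=
  sInf {d | ∃ v, eccentricity G v = d}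

/-- The interval `I[x,y]`: vertices lying on some shortest `x`–`y` path. -/
def interval {α : Type*} (G : SimpleGraph α) (x y : α) : Set α :=
  {w | G.dist x w + G.dist w y = G.dist x y}

/-- A graph is adjacency `k`-resolved if for every pair of adjacent vertices
`x, y` there is a vertex `w` with `d(y,w) ≥ k` and `x ∈ I[y,w]`, or
`d(x,w) ≥ k` and `y ∈ I[x,w]`. -/
def AdjKResolved {α : Type*} (G : SimpleGraph α) (k : ℕ) : Prop :=
  ∀ x y : α, G.Adj x y →
    ∃ w : α, (k ≤ G.dist y w ∧ x ∈ interval G y w) ∨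
      (k ≤ G.dist x w ∧ y ∈ interval G x w)

/-- The true twin equivalence relation: `u ≈ v` iff `N[u] = N[v]`. -/
def trueTwinSetoid {α : Type*} (G : SimpleGraph α) : Setoid α where
  r u v := insert u (G.neighborSet u) = insert v (G.neighborSet v)
  iseqv := ⟨fun _ => rfl, Eq.symm, Eq.trans⟩

section Aux

open SimpleGraph

variable {α β : Type*} {G : SimpleGraph α} {H : SimpleGraph β}

lemma strongProd_adj_fst {x y : α × β} (h : (strongProd G H).Adj x y) :
    x.1 = y.1 ∨ G.Adj x.1 y.1 := by
  rcases h with ⟨h1, _⟩ | ⟨_, h1⟩ | ⟨h1, _⟩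
  · exact Or.inl h1
  · exact Or.inr h1
  · exact Or.inr h1

lemma strongProd_adj_snd {x y : α × β} (h : (strongProd G H).Adj x y) :
    x.2 = y.2 ∨ H.Adj x.2 y.2 := by
  rcases h with ⟨_, h2⟩ | ⟨h2, _⟩ | ⟨_, h2⟩
  · exact Or.inr h2
  · exact Or.inl h2
  · exact Or.inr h2

lemma dist_fst_le_walk (hG : G.Connected) (hH : H.Connected)
    {x y : α × β} (w : (strongProd G H).Walk x y) :
    G.dist x.1 y.1 ≤ w.length ∧ H.dist x.2 y.2 ≤ w.length := by
  induction w with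
  | nil => simp [SimpleGraph.dist_self]
  | cons h p ih =>
    constructor
    · rcases strongProd_adj_fst h with he | ha
      · rw [Walk.length_cons, he]; exact ih.1.trans (Nat.le_succ _)
      · calc G.dist _ _ ≤ G.dist _ _ + G.dist _ _ := hG.dist_triangle
          _ ≤ 1 + p.length := by
              have := SimpleGraph.dist_le (Walk.cons ha Walk.nil)
              exact Nat.add_le_add (by simpa using this) ih.1
          _ = (Walk.cons h p).length := by simp [Walk.length_cons, Nat.add_comm]
    · rcases strongProd_adj_snd h with he | ha
      · rw [Walk.length_cons, he]; exact ih.2.trans (Nat.le_succ _)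
      · calc H.dist _ _ ≤ H.dist _ _ + H.dist _ _ := hH.dist_triangle
          _ ≤ 1 + p.length := by
              have := SimpleGraph.dist_le (Walk.cons ha Walk.nil)
              exact Nat.add_le_add (by simpa using this) ih.2
          _ = (Walk.cons h p).length := by simp [Walk.length_cons, Nat.add_comm]

lemma walk_fix_fst {a : α} {b d : β} (q : H.Walk b d) :
    ∃ w : (strongProd G H).Walk (a, b) (a, d), w.length = q.length := by
  induction q with
  | nil => exact ⟨Walk.nil, rfl⟩
  | @cons u v z h p ih =>
    obtain ⟨w, hw⟩ := ih
    exact ⟨Walk.cons (show (strongProd G H).Adj (a, u) (a, v) from Or.inl ⟨rfl, h⟩) w,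
      by simp [hw]⟩

lemma walk_fix_snd {b : β} {a c : α} (p : G.Walk a c) :
    ∃ w : (strongProd G H).Walk (a, b) (c, b), w.length = p.length := by
  induction p with
  | nil => exact ⟨Walk.nil, rfl⟩
  | @cons u v z h p ih =>
    obtain ⟨w, hw⟩ := ih
    exact ⟨Walk.cons (show (strongProd G H).Adj (u, b) (v, b) from Or.inr (Or.inl ⟨rfl, h⟩)) w,
      by simp [hw]⟩

lemma walk_strongProd {a c : α} {d : β} (p : G.Walk a c) :
    ∀ (b : β) (q : H.Walk b d),
    ∃ w : (strongProd G H).Walk (a, b) (c, d), w.length = max p.length q.length := by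
  induction p with
  | nil =>
    intro b q
    obtain ⟨w, hw⟩ := walk_fix_fst (G := G) q
    exact ⟨w, by simp [hw]⟩
  | @cons a1 a2 a3 h p ih =>
    intro b q
    cases q with
    | nil =>
      obtain ⟨w, hw⟩ := walk_fix_snd (b := d) (Walk.cons h p)
      exact ⟨w, by simp [hw]⟩
    | @cons bb b2 dd h2 q =>
      obtain ⟨w, hw⟩ := ih _ q
      refine ⟨Walk.cons (show (strongProd G H).Adj (a1, b) (a2, b2) from
        Or.inr (Or.inr ⟨h, h2⟩)) w, ?_⟩
      rw [Walk.length_cons, Walk.length_cons, Walk.length_cons, hw]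
      omega

lemma dist_strongProd (hG : G.Connected) (hH : H.Connected) (a c : α) (b d : β) :
    (strongProd G H).dist (a, b) (c, d) = max (G.dist a c) (H.dist b d) := by
  obtain ⟨p, hp⟩ := hG.exists_walk_length_eq_dist a c
  obtain ⟨q, hq⟩ := hH.exists_walk_length_eq_dist b d
  obtain ⟨w, hw⟩ := walk_strongProd p _ q
  refine le_antisymm ?_ ?_
  · have := SimpleGraph.dist_le w
    rw [hw, hp, hq] at this
    exact this
  · obtain ⟨w0, hw0⟩ := w.reachable.exists_walk_length_eq_dist
    have h := dist_fst_le_walk hG hH w0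
    rw [hw0] at h
    exact max_le h.1 h.2

lemma two_color_aux : ∀ x y z : Fin 2, x ≠ y → (x = z ↔ ¬ y = z) := by decide

lemma walk_parity (c : H.Coloring (Fin 2)) {u v : β} (w : H.Walk u v) :
    (c u = c v ↔ Even w.length) := by
  induction w with
  | nil => simp
  | cons h p ih =>
    have hne : c _ ≠ c _ := c.valid h
    rw [Walk.length_cons, Nat.even_add_one, ← ih, two_color_aux _ _ _ hne]

lemma dist_parity (hH : H.Connected) (c : H.Coloring (Fin 2)) (u v : β) :
    (c u = c v ↔ Even (H.dist u v)) := by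
  obtain ⟨p, hp⟩ := hH.exists_walk_length_eq_dist u v
  rw [← hp]; exact walk_parity c p

lemma two_color_aux2 : ∀ x y z : Fin 2, (x = z ↔ y = z) → x = y := by decide

lemma bipartite_dist_ne (hH : H.Connected) (c : H.Coloring (Fin 2)) {u v : β}
    (h : H.Adj u v) (t : β) : H.dist u t ≠ H.dist v t := by
  intro hEq
  apply c.valid h
  apply two_color_aux2 _ _ (c t)
  rw [dist_parity hH c u t, dist_parity hH c v t, hEq]

variable [Fintype α] [Fintype β]

lemma dist_lt_card (hG : G.Connected) (u v : α) : G.dist u v < Fintype.card α := by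
  classical
  obtain ⟨p⟩ := hG u v
  calc G.dist u v ≤ (p.toPath : G.Walk u v).length := SimpleGraph.dist_le _
    _ < Fintype.card α := p.toPath.2.length_lt

lemma ecc_spec (hH : H.Connected) (v : β) :
    (∃ t, H.dist v t = eccentricity H v) ∧ ∀ t, H.dist v t ≤ eccentricity H v := by
  have hbdd : BddAbove {d | ∃ u, H.dist v u = d} :=
    ⟨Fintype.card β, fun d ⟨u, hu⟩ => hu ▸ (dist_lt_card hH v u).le⟩
  constructor
  · exact Nat.sSup_mem ⟨0, show ∃ u, H.dist v u = 0 from ⟨v, SimpleGraph.dist_self⟩⟩ hbdd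
  · intro t; exact le_csSup hbdd ⟨t, rfl⟩

lemma radius_le_ecc (v : β) : graphRadius H ≤ eccentricity H v :=
  Nat.sInf_le ⟨v, rfl⟩

lemma dist_le_diam (hG : G.Connected) (u v : α) : G.dist u v ≤ graphDiam G := by
  have h1 : G.dist u v ≤ eccentricity G u := (ecc_spec hG u).2 v
  refine h1.trans (le_csSup ?_ ⟨u, rfl⟩)
  refine ⟨Fintype.card α, fun d ⟨w, hw⟩ => ?_⟩
  subst hw
  refine csSup_le ⟨0, show ∃ u, G.dist w u = 0 from ⟨w, SimpleGraph.dist_self⟩⟩ fun d ⟨t, ht⟩ => ht ▸ (dist_lt_card hG w t).le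

lemma localMetricDim_spec (hG : G.Connected) :
    ∃ S : Finset α, S.card = localMetricDim G ∧ IsLocalMetricGenerator G ↑S := by
  classical
  have hne : {n | ∃ S : Finset α, S.card = n ∧ IsLocalMetricGenerator G ↑S}.Nonempty := by
    refine ⟨(Finset.univ : Finset α).card, Finset.univ, rfl, fun u v huv => ?_⟩
    refine ⟨u, by simp, fun hcontra => ?_⟩
    rw [SimpleGraph.dist_self] at hcontra
    exact huv.ne' (hG.dist_eq_zero_iff.mp hcontra.symm)
  exact Nat.sInf_mem hne

end Aux

/-- if `H` is bipartite and `D(G) < r(H)`, then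
`dim_l(G ⊠ H) ≤ |V(H)| · dim_l(G)`. -/
theorem stmt3 {α β : Type*} [Fintype α] [Fintype β]
    (G : SimpleGraph α) (H : SimpleGraph β)
    (hG : G.Connected) (hH : H.Connected)
    (hn1 : 2 ≤ Fintype.card α) (hn2 : 2 ≤ Fintype.card β)
    (hbip : H.Colorable 2) (hD : graphDiam G < graphRadius H) :
    localMetricDim (strongProd G H) ≤ Fintype.card β * localMetricDim G := by
  obtain ⟨S, hScard, hSgen⟩ := localMetricDim_spec hG
  -- S is nonempty since G has an edge
  obtain ⟨u0, v0, huv0⟩ : ∃ u v : α, G.Adj u v := by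
    obtain ⟨u, v, huv⟩ := Fintype.exists_pair_of_one_lt_card hn1
    obtain ⟨p⟩ := hG u v
    cases p with
    | nil => exact absurd rfl huv
    | cons h _ => exact ⟨_, _, h⟩
  obtain ⟨s0, hs0, _⟩ := hSgen u0 v0 huv0
  obtain ⟨c⟩ := hbip
  have key : IsLocalMetricGenerator (strongProd G H) ↑(S ×ˢ (Finset.univ : Finset β)) := by
    rintro ⟨u1, u2⟩ ⟨v1, v2⟩ hadj
    rcases strongProd_adj_fst hadj with he | haG
    · -- first coordinates equal; H.Adj u2 v2
      have he' : u1 = v1 := he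
      subst he'
      have haH : H.Adj u2 v2 := by
        rcases strongProd_adj_snd hadj with he2 | h2
        · exfalso
          have he2' : u2 = v2 := he2
          subst he2'
          exact (strongProd G H).irrefl hadj
        · exact h2
      obtain ⟨t, ht⟩ := (ecc_spec hH u2).1
      refine ⟨(s0, t), by simp [hs0], ?_⟩
      have hdg : G.dist u1 s0 ≤ graphDiam G := dist_le_diam hG u1 s0
      have hre : graphRadius H ≤ H.dist u2 t := ht ▸ radius_le_ecc u2
      have h1 : G.dist u1 s0 ≤ H.dist u2 t := hdg.trans (hD.le.trans hre)
      have h2 : G.dist u1 s0 ≤ H.dist v2 t := by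
        have htri : H.dist u2 t ≤ H.dist u2 v2 + H.dist v2 t := hH.dist_triangle
        have h12 : H.dist u2 v2 ≤ 1 := by
          simpa using SimpleGraph.dist_le (Walk.cons haH Walk.nil)
        have : graphDiam G + 1 ≤ H.dist u2 t := hD.trans_le hre
        omega
      rw [dist_strongProd hG hH, dist_strongProd hG hH,
        max_eq_right h1, max_eq_right h2]
      exact bipartite_dist_ne hH c haH t
    · -- G.Adj u1 v1
      obtain ⟨s, hs, hds⟩ := hSgen u1 v1 haG
      have hv2u2 : H.dist v2 u2 ≤ 1 := by
        rcases strongProd_adj_snd hadj with he2 | h2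
        · have he2' : u2 = v2 := he2
          rw [he2', SimpleGraph.dist_self]; omega
        · simpa using SimpleGraph.dist_le (Walk.cons h2.symm Walk.nil)
      have hu2v2 : H.dist u2 v2 ≤ 1 := SimpleGraph.dist_comm ▸ hv2u2
      rcases lt_or_gt_of_ne hds with hlt | hgt
      · refine ⟨(s, u2), by simp [hs], ?_⟩
        rw [dist_strongProd hG hH, dist_strongProd hG hH, SimpleGraph.dist_self,
          max_eq_left (Nat.zero_le _)]
        intro hEq
        have : G.dist v1 s ≤ max (G.dist v1 s) (H.dist v2 u2) := le_max_left _ _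
        omega
      · refine ⟨(s, v2), by simp [hs], ?_⟩
        rw [dist_strongProd hG hH, dist_strongProd hG hH, SimpleGraph.dist_self,
          max_eq_left (Nat.zero_le _)]
        intro hEq
        have : G.dist u1 s ≤ max (G.dist u1 s) (H.dist u2 v2) := le_max_left _ _
        omega
  have : localMetricDim (strongProd G H) ≤ (S ×ˢ (Finset.univ : Finset β)).card :=
    Nat.sInf_le ⟨S ×ˢ Finset.univ, rfl, key⟩
  calc localMetricDim (strongProd G H) ≤ (S ×ˢ (Finset.univ : Finset β)).card := this
    _ = Fintype.card β * localMetricDim G := by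
        rw [Finset.card_product, hScard, Finset.card_univ, Nat.mul_comm]
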